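/- Let A be a commutative ring and let u ∈ A[t,t⁻¹] be a unit of the Laurent polynomial ring, where A is a connected reduced ring. Then u = a·tⁿ for some unit a ∈ A^× and some integer n. -/

import Mathlib

open LaurentPolynomial Finsupp

section aux

variable {R : Type*} [CommRing R]

/-- coefficient of the product at the sum of top degrees. -/
lemma laurent_mul_apply_max {f g : LaurentPolynomial R} (hf : f.coeff.support.Nonempty)
    (hg : g.coeff.support.Nonempty) :
    (f * g).coeff (f.coeff.support.max' hf + g.coeff.support.max' hg)
      = f.coeff (f.coeff.support.max' hf) * g.coeff (g.coeff.support.max' hg) := by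
  set M := f.coeff.support.max' hf with hM
  set N := g.coeff.support.max' hg with hN
  rw [AddMonoidAlgebra.coeff_mul]
  rw [Finsupp.sum]
  have h1 : ∀ a ∈ f.coeff.support,
      (g.coeff.sum fun b c => if a + b = M + N then f.coeff a * c else 0)
        = if a = M then f.coeff M * g.coeff N else 0 := by
    intro a ha
    rw [Finsupp.sum]
    by_cases haM : a = M
    · subst haM
      rw [if_pos rfl]
      rw [Finset.sum_eq_single N]
      · simp
      · intro b hb hbN
        have : b < N := lt_of_le_of_ne (Finset.le_max' _ _ hb) hbN
        have h2 : M + b ≠ M + N := by omega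
        simp [h2]
      · intro hN'
        exact absurd (Finset.max'_mem _ hg) hN'
    · rw [if_neg haM]
      apply Finset.sum_eq_zero
      intro b hb
      have h1 : a < M := lt_of_le_of_ne (Finset.le_max' _ _ ha) haM
      have h2 : b ≤ N := Finset.le_max' _ _ hb
      have : a + b ≠ M + N := by omega
      simp [this]
  rw [Finset.sum_congr rfl h1, Finset.sum_ite_eq' f.coeff.support M (fun _ => f.coeff M * g.coeff N),
    if_pos (Finset.max'_mem _ hf)]

lemma laurent_mul_apply_min {f g : LaurentPolynomial R} (hf : f.coeff.support.Nonempty)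
    (hg : g.coeff.support.Nonempty) :
    (f * g).coeff (f.coeff.support.min' hf + g.coeff.support.min' hg)
      = f.coeff (f.coeff.support.min' hf) * g.coeff (g.coeff.support.min' hg) := by
  set M := f.coeff.support.min' hf with hM
  set N := g.coeff.support.min' hg with hN
  rw [AddMonoidAlgebra.coeff_mul]
  rw [Finsupp.sum]
  have h1 : ∀ a ∈ f.coeff.support,
      (g.coeff.sum fun b c => if a + b = M + N then f.coeff a * c else 0)
        = if a = M then f.coeff M * g.coeff N else 0 := by
    intro a ha
    rw [Finsupp.sum]
    by_cases haM : a = M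
    · subst haM
      rw [if_pos rfl]
      rw [Finset.sum_eq_single N]
      · simp
      · intro b hb hbN
        have : N < b := lt_of_le_of_ne (Finset.min'_le _ _ hb) (Ne.symm hbN)
        have h2 : M + b ≠ M + N := by omega
        simp [h2]
      · intro hN'
        exact absurd (Finset.min'_mem _ hg) hN'
    · rw [if_neg haM]
      apply Finset.sum_eq_zero
      intro b hb
      have h1 : M < a := lt_of_le_of_ne (Finset.min'_le _ _ ha) (Ne.symm haM)
      have h2 : N ≤ b := Finset.min'_le _ _ hb
      have : a + b ≠ M + N := by omega
      simp [this]
  rw [Finset.sum_congr rfl h1, Finset.sum_ite_eq' f.coeff.support M (fun _ => f.coeff M * g.coeff N),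
    if_pos (Finset.min'_mem _ hf)]

lemma laurent_mul_apply_zero (f g : LaurentPolynomial R) :
    (f * g).coeff 0 = ∑ a ∈ f.coeff.support, f.coeff a * g.coeff (-a) := by
  rw [AddMonoidAlgebra.coeff_mul, Finsupp.sum]
  refine Finset.sum_congr rfl fun a _ => ?_
  rw [Finsupp.sum]
  have h1 : ∀ b ∈ g.coeff.support, (if a + b = 0 then f.coeff a * g.coeff b else 0)
      = (if b = -a then f.coeff a * g.coeff b else 0) := by
    intro b _
    have : (a + b = 0) ↔ (b = -a) := by omega
    simp [this]
  rw [Finset.sum_congr rfl h1, Finset.sum_ite_eq' g.coeff.support (-a) (fun b => f.coeff a * g.coeff b)]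
  split_ifs with h
  · rfl
  · rw [Finsupp.notMem_support_iff.1 h, mul_zero]

lemma laurent_one_apply_ne {n : ℤ} (hn : n ≠ 0) : (1 : LaurentPolynomial R).coeff n = 0 := by
  rw [AddMonoidAlgebra.one_def, AddMonoidAlgebra.coeff_single, Finsupp.single_apply, if_neg (by omega)]

/-- domain case -/
lemma laurent_unit_coeff_mul_eq_zero {D : Type*} [CommRing D] [IsDomain D]
    {u v : LaurentPolynomial D} (h : u * v = 1) {i j : ℤ} (hij : i + j ≠ 0) :
    u.coeff i * v.coeff j = 0 := by
  have hu : u ≠ 0 := left_ne_zero_of_mul_eq_one h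
  have hv : v ≠ 0 := right_ne_zero_of_mul_eq_one h
  have hus : u.coeff.support.Nonempty := Finsupp.support_nonempty_iff.2 (AddMonoidAlgebra.coeff_eq_zero.not.2 hu)
  have hvs : v.coeff.support.Nonempty := Finsupp.support_nonempty_iff.2 (AddMonoidAlgebra.coeff_eq_zero.not.2 hv)
  set Mu := u.coeff.support.max' hus
  set Mv := v.coeff.support.max' hvs
  set mu := u.coeff.support.min' hus
  set mv := v.coeff.support.min' hvs
  have hMax : Mu + Mv = 0 := by
    by_contra hne
    have := laurent_mul_apply_max hus hvs
    rw [h, laurent_one_apply_ne hne] at this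
    exact mul_ne_zero (Finsupp.mem_support_iff.1 (Finset.max'_mem _ hus))
      (Finsupp.mem_support_iff.1 (Finset.max'_mem _ hvs)) this.symm
  have hMin : mu + mv = 0 := by
    by_contra hne
    have := laurent_mul_apply_min hus hvs
    rw [h, laurent_one_apply_ne hne] at this
    exact mul_ne_zero (Finsupp.mem_support_iff.1 (Finset.min'_mem _ hus))
      (Finsupp.mem_support_iff.1 (Finset.min'_mem _ hvs)) this.symm
  have h1 : mu ≤ Mu := Finset.min'_le _ _ (Finset.max'_mem _ hus)
  have h2 : mv ≤ Mv := Finset.min'_le _ _ (Finset.max'_mem _ hvs)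
  have hueq : mu = Mu := by omega
  have hveq : mv = Mv := by omega
  by_contra hne
  have hi : i ∈ u.coeff.support := Finsupp.mem_support_iff.2 fun h0 => hne (by rw [h0, zero_mul])
  have hj : j ∈ v.coeff.support := Finsupp.mem_support_iff.2 fun h0 => hne (by rw [h0, mul_zero])
  have : i = Mu := le_antisymm (Finset.le_max' _ _ hi) (hueq ▸ Finset.min'_le _ _ hi)
  have : j = Mv := le_antisymm (Finset.le_max' _ _ hj) (hveq ▸ Finset.min'_le _ _ hj)
  omega

/-- coefficientwise map of Laurent polynomials -/
noncomputable def laurentMap {A B : Type*} [CommRing A] [CommRing B] (φ : A →+* B) :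
    LaurentPolynomial A →+* LaurentPolynomial B :=
  AddMonoidAlgebra.liftNCRingHom ((AddMonoidAlgebra.singleZeroRingHom).comp φ)
    (AddMonoidAlgebra.of B ℤ) (fun _ _ => Commute.all _ _)

lemma laurentMap_apply {A B : Type*} [CommRing A] [CommRing B] (φ : A →+* B)
    (p : LaurentPolynomial A) (i : ℤ) : (laurentMap φ p).coeff i = φ (p.coeff i) := by
  induction p using AddMonoidAlgebra.induction with
  | zero => simp
  | single_add a b f _ _ ih =>
    rw [map_add]
    have hs : laurentMap φ (AddMonoidAlgebra.single a b) = AddMonoidAlgebra.single a (φ b) := by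
      simp only [laurentMap, AddMonoidAlgebra.liftNCRingHom]
      show AddMonoidAlgebra.liftNC _ _ (AddMonoidAlgebra.single a b) = _
      rw [AddMonoidAlgebra.liftNC_single]
      simp only [AddMonoidAlgebra.of_apply, AddMonoidHom.coe_coe, RingHom.coe_comp,
        Function.comp_apply]
      show AddMonoidAlgebra.single 0 (φ b) * AddMonoidAlgebra.single _ 1 = _
      rw [AddMonoidAlgebra.single_mul_single]
      simp
    rw [AddMonoidAlgebra.coeff_add, AddMonoidAlgebra.coeff_add, Finsupp.add_apply, Finsupp.add_apply, hs, map_add, ih]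
    congr 1
    rw [AddMonoidAlgebra.coeff_single, AddMonoidAlgebra.coeff_single, Finsupp.single_apply, Finsupp.single_apply]
    split_ifs <;> simp

end aux

theorem laurent_unit_eq_unit_mul_T {A : Type*} [CommRing A] [IsReduced A]
    (hconn : ∀ e : A, IsIdempotentElem e → e = 0 ∨ e = 1)
    (u : (LaurentPolynomial A)ˣ) :
    ∃ (a : Aˣ) (n : ℤ),
      (u : LaurentPolynomial A) = LaurentPolynomial.C (a : A) * LaurentPolynomial.T n := by
  rcases subsingleton_or_nontrivial A with hA | hA
  · exact ⟨1, 0, Subsingleton.elim _ _⟩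
  set U : LaurentPolynomial A := (u : LaurentPolynomial A) with hU
  set V : LaurentPolynomial A := ((u⁻¹ : (LaurentPolynomial A)ˣ) : LaurentPolynomial A) with hV
  have hUV : U * V = 1 := u.mul_inv
  -- key vanishing
  have key : ∀ i j : ℤ, i + j ≠ 0 → U.coeff i * V.coeff j = 0 := by
    intro i j hij
    have : IsNilpotent (U.coeff i * V.coeff j) := by
      rw [nilpotent_iff_mem_prime]
      intro J hJ
      haveI := hJ
      rw [← Ideal.Quotient.eq_zero_iff_mem, map_mul]
      have h1 : laurentMap (Ideal.Quotient.mk J) U * laurentMap (Ideal.Quotient.mk J) V = 1 := by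
        rw [← map_mul, hUV, map_one]
      have := laurent_unit_coeff_mul_eq_zero h1 hij
      rwa [laurentMap_apply, laurentMap_apply] at this
    exact this.eq_zero
  -- idempotents
  set e : ℤ → A := fun n => U.coeff n * V.coeff (-n) with he
  have hsum : ∑ n ∈ U.coeff.support, e n = 1 := by
    have := laurent_mul_apply_zero U V
    rw [hUV] at this
    rw [he]
    simp only [← this]
    rw [AddMonoidAlgebra.one_def, AddMonoidAlgebra.coeff_single, Finsupp.single_apply, if_pos rfl]
  have hidem : ∀ n, IsIdempotentElem (e n) := by
    intro n
    have : e n * (∑ m ∈ U.coeff.support, e m) = e n * e n := by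
      rw [Finset.mul_sum]
      by_cases hn : n ∈ U.coeff.support
      · rw [Finset.sum_eq_single n]
        · intro m hm hmn
          have : U.coeff m * V.coeff (-n) = 0 := key m (-n) (by omega)
          calc e n * e m = (U.coeff n * (U.coeff m * V.coeff (-n))) * V.coeff (-m) := by ring
            _ = 0 := by rw [this]; ring
        · intro h; exact absurd hn h
      · have h0 : U.coeff n = 0 := Finsupp.notMem_support_iff.1 hn
        rw [Finset.sum_eq_zero, he]
        · simp [h0]
        · intro m hm
          have : U.coeff m * V.coeff (-n) = 0 := by
            by_cases hmn : m = n
            · subst hmn; simp [h0, Finsupp.notMem_support_iff.1 hn]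
            · exact key m (-n) (by omega)
          calc e n * e m = (U.coeff n * (U.coeff m * V.coeff (-n))) * V.coeff (-m) := by ring
            _ = 0 := by rw [this]; ring
    rw [hsum, mul_one] at this
    exact this.symm
  -- find the n with e n = 1
  have hex : ∃ n ∈ U.coeff.support, e n = 1 := by
    by_contra hno
    push_neg at hno
    have : ∑ n ∈ U.coeff.support, e n = 0 := Finset.sum_eq_zero fun n hn => by
      rcases hconn (e n) (hidem n) with h | h
      · exact h
      · exact absurd h (hno n hn)
    rw [hsum] at this
    exact one_ne_zero this
  obtain ⟨n, hn, hen⟩ := hex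
  have hmul : U.coeff n * V.coeff (-n) = 1 := hen
  refine ⟨Units.mkOfMulEqOne (U.coeff n) (V.coeff (-n)) hmul, n, ?_⟩
  rw [← single_eq_C_mul_T]
  ext m
  rcases eq_or_ne m n with rfl | hmn
  · rw [AddMonoidAlgebra.coeff_single, Finsupp.single_eq_same]; rfl
  · rw [AddMonoidAlgebra.coeff_single, Finsupp.single_eq_of_ne' (Ne.symm hmn)]
    have h0 : U.coeff m * V.coeff (-n) = 0 := key m (-n) (by omega)
    calc U.coeff m = U.coeff m * (U.coeff n * V.coeff (-n)) := by rw [hmul, mul_one]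
      _ = (U.coeff m * V.coeff (-n)) * U.coeff n := by ring
      _ = 0 := by rw [h0, zero_mul]
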